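/- (Theorem 1, third part) Suppose lim_{k→∞} ‖mean(α^(k)·z^(k))‖ = 0, lim_{k→∞} ‖mean(β^(k)·s^(k))‖ = 0, lim_{k→∞} ‖s̃^(k)‖ = 0 and lim_{k→∞} ‖z̃^(k)‖ = 0, and suppose inf_k ‖ᾱ^(k)‖₂ > 0, inf_k ‖β̄^(k)‖₂ > 0, sup_k ‖α̃^(k)‖₂ < ∞ and sup_k ‖β̃^(k)‖₂ < ∞. Then lim_{k→∞} ‖s̄^(k)‖ = 0 and lim_{k→∞} ‖z̄^(k)‖ = 0; if moreover s̄^(k+1) = −ḡ^(k+1) + mean(β^(k)·s^(k)) for all k, then also lim_{k→∞} ‖ḡ^(k)‖ = 0. -/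

import Mathlib

open scoped BigOperators
open Filter

noncomputable section

/-- Row-space: each agent holds a vector in ℝⁿ (Euclidean). -/
abbrev Vec (n : ℕ) := EuclideanSpace ℝ (Fin n)

/-- A "matrix" in ℝ^{N×n}, represented row-wise. -/
abbrev Mat (N n : ℕ) := Fin N → Vec n

/-- Row-mean operator `B ↦ J·B` with `J = (1/N)·11ᵀ`. -/
def meanM {N n : ℕ} (B : Mat N n) : Mat N n := fun _ => (N : ℝ)⁻¹ • ∑ i, B i

/-- Consensus violation `B̃ = B − B̄`. -/
def tilde {N n : ℕ} (B : Mat N n) : Mat N n := B - meanM B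

/-- Frobenius norm of a row-wise matrix. -/
def fnorm {N n : ℕ} (B : Mat N n) : ℝ := Real.sqrt (∑ i, ‖B i‖ ^ 2)

/-- Spectral norm (ℓ₂ operator norm) of a square matrix. -/
def specNorm {N : ℕ} (A : Matrix (Fin N) (Fin N) ℝ) : ℝ :=
  ‖LinearMap.toContinuousLinearMap (Matrix.toEuclideanLin A)‖

/-- Action of an N×N matrix on a row-wise N×n matrix. -/
def Wact {N n : ℕ} (W : Matrix (Fin N) (Fin N) ℝ) (B : Mat N n) : Mat N n :=
  fun i => ∑ j, W i j • B j

/-- Action of a diagonal matrix `diag a` on a row-wise matrix. -/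
def dAct {N n : ℕ} (a : Fin N → ℝ) (B : Mat N n) : Mat N n := fun i => a i • B i

/-- The matrix of row-wise gradients: i-th row is `∇f_i(x_i)ᵀ`. -/
def gRow {N n : ℕ} (f : Fin N → Vec n → ℝ) (x : Mat N n) : Mat N n :=
  fun i => gradient (f i) (x i)

/-- The all-(1/N) matrix `J = (1/N)·11ᵀ`. -/
def Jmat (N : ℕ) : Matrix (Fin N) (Fin N) ℝ := Matrix.of fun _ _ => (N : ℝ)⁻¹

/-- Double stochasticity of `W`. -/
def DoublyStochastic {N : ℕ} (W : Matrix (Fin N) (Fin N) ℝ) : Prop :=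
  (∀ i, ∑ j, W i j = 1) ∧ (∀ j, ∑ i, W i j = 1)

lemma fnorm_nonneg {N n : ℕ} (B : Mat N n) : 0 ≤ fnorm B := Real.sqrt_nonneg _

lemma abs_le_specNorm_diagonal {N : ℕ} (d : Fin N → ℝ) (i : Fin N) :
    |d i| ≤ specNorm (Matrix.diagonal d) := by
  have h : Matrix.toEuclideanLin (Matrix.diagonal d) (EuclideanSpace.single i 1)
      = EuclideanSpace.single i (d i) := by
    rw [Matrix.toEuclideanLin_apply, EuclideanSpace.ofLp_single, Matrix.diagonal_mulVec_single,
      mul_one, EuclideanSpace.toLp_single]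
  have h2 := (LinearMap.toContinuousLinearMap (Matrix.toEuclideanLin (Matrix.diagonal d))).le_opNorm
    (EuclideanSpace.single i 1)
  rw [LinearMap.coe_toContinuousLinearMap', h, EuclideanSpace.norm_single,
    EuclideanSpace.norm_single, norm_one, mul_one, Real.norm_eq_abs] at h2
  exact h2

lemma fnorm_meanM {N n : ℕ} (B : Mat N n) :
    fnorm (meanM B) = Real.sqrt N * ‖(N : ℝ)⁻¹ • ∑ i, B i‖ := by
  unfold fnorm meanM
  rw [Finset.sum_const, Finset.card_univ, Fintype.card_fin, nsmul_eq_mul,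
    Real.sqrt_mul (by positivity)]
  rw [Real.sqrt_sq (norm_nonneg _)]

lemma sum_norm_le_sqrt {N n : ℕ} (B : Mat N n) :
    ∑ i, ‖B i‖ ≤ Real.sqrt N * fnorm B := by
  have h := sq_sum_le_card_mul_sum_sq (s := (Finset.univ : Finset (Fin N)))
    (f := fun i => ‖B i‖)
  simp only [Finset.card_univ, Fintype.card_fin] at h
  have h1 : ∑ i, ‖B i‖ ≤ Real.sqrt ((N : ℝ) * ∑ i, ‖B i‖ ^ 2) := by
    rw [← Real.sqrt_sq (by positivity : (0:ℝ) ≤ ∑ i, ‖B i‖)]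
    exact Real.sqrt_le_sqrt h
  rw [Real.sqrt_mul (by positivity)] at h1
  exact h1

lemma key {N n : ℕ} (c C : ℝ) (hc : 0 < c) (β : Fin N → ℝ) (s : Mat N n)
    (hcb : c ≤ (N : ℝ)⁻¹ * ∑ i, β i)
    (hCb : ∀ i, |β i - (N : ℝ)⁻¹ * ∑ j, β j| ≤ C) :
    fnorm (meanM s) ≤ c⁻¹ * (fnorm (meanM (dAct β s)) + C * fnorm (tilde s)) := by
  have hN : 0 < N := by
    rcases Nat.eq_zero_or_pos N with h | h
    · exfalso; subst h; simp at hcb; linarith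
    · exact h
  set b : ℝ := (N : ℝ)⁻¹ * ∑ i, β i with hb
  set m : Vec n := (N : ℝ)⁻¹ • ∑ i, s i with hm
  have hNne : (N : ℝ) ≠ 0 := by positivity
  have hsum : ∑ i, s i = (N : ℝ) • m := by
    rw [hm, smul_smul, mul_inv_cancel₀ hNne, one_smul]
  have hβsum : ∑ i, β i = (N : ℝ) * b := by
    rw [hb, ← mul_assoc, mul_inv_cancel₀ hNne, one_mul]
  have hexp : ∑ i, (β i - b) • (s i - m) = (∑ i, β i • s i) - ((N : ℝ) * b) • m := by
    have : ∀ i, (β i - b) • (s i - m) = β i • s i - β i • m - b • s i + b • m := by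
      intro i; rw [sub_smul, smul_sub, smul_sub]; abel
    rw [Finset.sum_congr rfl fun i _ => this i]
    simp only [Finset.sum_add_distrib, Finset.sum_sub_distrib]
    rw [← Finset.sum_smul, ← Finset.smul_sum, hsum, hβsum, Finset.sum_const,
      Finset.card_univ, Fintype.card_fin, ← Nat.cast_smul_eq_nsmul ℝ]
    rw [smul_comm b ((N : ℝ)) m, mul_smul]
    abel
  have hkey : b • m = ((N : ℝ)⁻¹ • (∑ i, β i • s i))
      - (N : ℝ)⁻¹ • ∑ i, (β i - b) • (s i - m) := by
    have hNb : (N : ℝ)⁻¹ • (((N : ℝ) * b) • m) = b • m := by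
      rw [smul_smul, ← mul_assoc, inv_mul_cancel₀ hNne, one_mul]
    rw [hexp, smul_sub, hNb]
    abel
  -- norm bound on b • m
  have hbm : c * ‖m‖ ≤ ‖(N : ℝ)⁻¹ • (∑ i, β i • s i)‖ + (N : ℝ)⁻¹ * (C * ∑ i, ‖s i - m‖) := by
    have h1 : ‖b • m‖ = b * ‖m‖ := by
      rw [norm_smul, Real.norm_eq_abs, abs_of_nonneg (le_trans hc.le hcb)]
    have h2 : ‖(N : ℝ)⁻¹ • ∑ i, (β i - b) • (s i - m)‖
        ≤ (N : ℝ)⁻¹ * (C * ∑ i, ‖s i - m‖) := by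
      rw [norm_smul, Real.norm_eq_abs, abs_of_nonneg (by positivity)]
      refine mul_le_mul_of_nonneg_left ?_ (by positivity)
      calc ‖∑ i, (β i - b) • (s i - m)‖ ≤ ∑ i, ‖(β i - b) • (s i - m)‖ :=
            norm_sum_le _ _
        _ ≤ ∑ i, C * ‖s i - m‖ := by
            refine Finset.sum_le_sum fun i _ => ?_
            rw [norm_smul, Real.norm_eq_abs]
            exact mul_le_mul_of_nonneg_right (hCb i) (norm_nonneg _)
        _ = C * ∑ i, ‖s i - m‖ := by rw [Finset.mul_sum]
    calc c * ‖m‖ ≤ b * ‖m‖ := mul_le_mul_of_nonneg_right hcb (norm_nonneg _)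
      _ = ‖b • m‖ := h1.symm
      _ ≤ ‖(N : ℝ)⁻¹ • (∑ i, β i • s i)‖
          + ‖(N : ℝ)⁻¹ • ∑ i, (β i - b) • (s i - m)‖ := by
          rw [hkey]; exact norm_sub_le _ _
      _ ≤ _ := by linarith
  have hC0 : 0 ≤ C := le_trans (abs_nonneg _) (hCb ⟨0, hN⟩)
  -- tilde rows
  have htrow : ∀ i, tilde s i = s i - m := fun i => rfl
  have hsn : ∑ i, ‖s i - m‖ ≤ Real.sqrt N * fnorm (tilde s) := by
    have := sum_norm_le_sqrt (tilde s)
    simpa [htrow] using this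
  -- put together
  have hfm : fnorm (meanM s) = Real.sqrt N * ‖m‖ := fnorm_meanM s
  have hfds : fnorm (meanM (dAct β s)) = Real.sqrt N * ‖(N : ℝ)⁻¹ • ∑ i, β i • s i‖ :=
    fnorm_meanM (dAct β s)
  have hsqrtN : Real.sqrt N * Real.sqrt N = (N : ℝ) := Real.mul_self_sqrt (by positivity)
  have hsq0 : (0:ℝ) < Real.sqrt N := Real.sqrt_pos.2 (by exact_mod_cast hN)
  rw [hfm, hfds]
  set ft := fnorm (tilde s) with hft
  set v := (N : ℝ)⁻¹ • ∑ i, β i • s i with hv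
  have hft0 : 0 ≤ ft := fnorm_nonneg _
  have hcross : Real.sqrt N * ((N : ℝ)⁻¹ * (C * (∑ i, ‖s i - m‖)))
      ≤ C * ft := by
    have h5 : Real.sqrt N * ((N : ℝ)⁻¹ * (C * (Real.sqrt N * ft))) = C * ft := by
      have : Real.sqrt N * ((N : ℝ)⁻¹ * (C * (Real.sqrt N * ft)))
          = (Real.sqrt N * Real.sqrt N) * ((N : ℝ)⁻¹ * (C * ft)) := by ring
      rw [this, hsqrtN, ← mul_assoc, mul_inv_cancel₀ hNne, one_mul]
    calc Real.sqrt N * ((N : ℝ)⁻¹ * (C * (∑ i, ‖s i - m‖)))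
        ≤ Real.sqrt N * ((N : ℝ)⁻¹ * (C * (Real.sqrt N * ft))) := by gcongr
      _ = C * ft := h5
  have h3 : c * (Real.sqrt N * ‖m‖) ≤ Real.sqrt N * ‖v‖ + C * ft := by
    calc c * (Real.sqrt N * ‖m‖) = Real.sqrt N * (c * ‖m‖) := by ring
      _ ≤ Real.sqrt N * (‖v‖ + (N : ℝ)⁻¹ * (C * ∑ i, ‖s i - m‖)) :=
          mul_le_mul_of_nonneg_left hbm hsq0.le
      _ = Real.sqrt N * ‖v‖ + Real.sqrt N * ((N : ℝ)⁻¹ * (C * ∑ i, ‖s i - m‖)) := by ring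
      _ ≤ Real.sqrt N * ‖v‖ + C * ft := by linarith
  rw [inv_mul_eq_div, le_div_iff₀ hc]
  linarith

lemma fnorm_eq_norm {N n : ℕ} (B : Mat N n) :
    fnorm B = ‖(WithLp.equiv 2 (Fin N → Vec n)).symm B‖ := by
  have h := PiLp.norm_eq_sum (p := 2) (β := fun _ : Fin N => Vec n)
    (by norm_num) ((WithLp.equiv 2 (Fin N → Vec n)).symm B)
  simp only [ENNReal.toReal_ofNat, Real.rpow_two] at h
  rw [fnorm, h, ← Real.sqrt_eq_rpow]
  rfl

lemma fnorm_sub_le {N n : ℕ} (A B : Mat N n) : fnorm (A - B) ≤ fnorm A + fnorm B := by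
  rw [fnorm_eq_norm, fnorm_eq_norm, fnorm_eq_norm]
  exact norm_sub_le ((WithLp.equiv 2 (Fin N → Vec n)).symm A)
    ((WithLp.equiv 2 (Fin N → Vec n)).symm B)

/-- Theorem 1 (third part): vanishing of the mean directions. If `‖mean(α^(k)z^(k))‖ → 0`,
`‖mean(β^(k)s^(k))‖ → 0`, `‖s̃^(k)‖ → 0`, `‖z̃^(k)‖ → 0`, with `inf_k ‖ᾱ^(k)‖₂ > 0`,
`inf_k ‖β̄^(k)‖₂ > 0`, `sup_k ‖α̃^(k)‖₂ < ∞`, `sup_k ‖β̃^(k)‖₂ < ∞`, then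
`‖s̄^(k)‖ → 0` and `‖z̄^(k)‖ → 0`; if moreover `s̄^(k+1) = −ḡ^(k+1) + mean(β^(k)s^(k))`
for all `k`, then also `‖ḡ^(k)‖ → 0`. -/
theorem stmt16 (N n : ℕ) (hN : 1 ≤ N) (hn : 1 ≤ n)
    (α β : ℕ → Fin N → ℝ) (hα : ∀ k i, 0 ≤ α k i) (hβ : ∀ k i, 0 ≤ β k i)
    (s z g : ℕ → Mat N n)
    (hmaz : Filter.Tendsto (fun k => fnorm (meanM (dAct (α k) (z k)))) Filter.atTop (nhds 0))
    (hmbs : Filter.Tendsto (fun k => fnorm (meanM (dAct (β k) (s k)))) Filter.atTop (nhds 0))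
    (hst : Filter.Tendsto (fun k => fnorm (tilde (s k))) Filter.atTop (nhds 0))
    (hzt : Filter.Tendsto (fun k => fnorm (tilde (z k))) Filter.atTop (nhds 0))
    (hαinf : ∃ c > (0 : ℝ), ∀ k, c ≤ (N : ℝ)⁻¹ * ∑ i, α k i)
    (hβinf : ∃ c > (0 : ℝ), ∀ k, c ≤ (N : ℝ)⁻¹ * ∑ i, β k i)
    (hαsup : ∃ C : ℝ, ∀ k,
      specNorm (Matrix.diagonal fun i => α k i - (N : ℝ)⁻¹ * ∑ j, α k j) ≤ C)
    (hβsup : ∃ C : ℝ, ∀ k,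
      specNorm (Matrix.diagonal fun i => β k i - (N : ℝ)⁻¹ * ∑ j, β k j) ≤ C) :
    Filter.Tendsto (fun k => fnorm (meanM (s k))) Filter.atTop (nhds 0) ∧
    Filter.Tendsto (fun k => fnorm (meanM (z k))) Filter.atTop (nhds 0) ∧
    ((∀ k, meanM (s (k + 1)) = -(meanM (g (k + 1))) + meanM (dAct (β k) (s k))) →
      Filter.Tendsto (fun k => fnorm (meanM (g k))) Filter.atTop (nhds 0)) := by
  obtain ⟨cα, hcα, hcαall⟩ := hαinf
  obtain ⟨cβ, hcβ, hcβall⟩ := hβinf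
  obtain ⟨Cα, hCαall⟩ := hαsup
  obtain ⟨Cβ, hCβall⟩ := hβsup
  have hCbβ : ∀ k i, |β k i - (N : ℝ)⁻¹ * ∑ j, β k j| ≤ Cβ := fun k i =>
    le_trans (abs_le_specNorm_diagonal (fun i => β k i - (N : ℝ)⁻¹ * ∑ j, β k j) i) (hCβall k)
  have hCbα : ∀ k i, |α k i - (N : ℝ)⁻¹ * ∑ j, α k j| ≤ Cα := fun k i =>
    le_trans (abs_le_specNorm_diagonal (fun i => α k i - (N : ℝ)⁻¹ * ∑ j, α k j) i) (hCαall k)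
  have hs : Tendsto (fun k => fnorm (meanM (s k))) atTop (nhds 0) := by
    refine squeeze_zero (fun k => fnorm_nonneg _)
      (fun k => key cβ Cβ hcβ (β k) (s k) (hcβall k) (hCbβ k)) ?_
    have := ((hmbs.add (hst.const_mul Cβ)).const_mul cβ⁻¹)
    simpa using this
  have hz : Tendsto (fun k => fnorm (meanM (z k))) atTop (nhds 0) := by
    refine squeeze_zero (fun k => fnorm_nonneg _)
      (fun k => key cα Cα hcα (α k) (z k) (hcαall k) (hCbα k)) ?_
    have := ((hmaz.add (hzt.const_mul Cα)).const_mul cα⁻¹)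
    simpa using this
  refine ⟨hs, hz, fun hrec => ?_⟩
  have hg1 : ∀ k, fnorm (meanM (g (k + 1)))
      ≤ fnorm (meanM (dAct (β k) (s k))) + fnorm (meanM (s (k + 1))) := by
    intro k
    have h : meanM (g (k + 1)) = meanM (dAct (β k) (s k)) - meanM (s (k + 1)) := by
      rw [hrec k]; abel
    rw [h]
    exact fnorm_sub_le _ _
  have hgs : Tendsto (fun k => fnorm (meanM (g (k + 1)))) atTop (nhds 0) := by
    refine squeeze_zero (fun k => fnorm_nonneg _) hg1 ?_
    have := hmbs.add (hs.comp (tendsto_add_atTop_nat 1))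
    simpa using this
  exact (tendsto_add_atTop_iff_nat 1).mp hgs
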